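/- arXiv:2302.01909 — 7 statements merged into one kernel-verified Lean document; each statement's English description precedes it below -/
import Mathlib

section
/- Let V ≤ S_h. Then V × {id} is a symmetry group for the pair (h,n) (i.e. there exists an SPF F with G(F) = V × {id}) if and only if V × {id} is an anonymity group for (h,n) (i.e. there exists an SPF F with G_1(F) = V × {id}). In particular, every anonymity group is a symmetry group. -/
open Equiv

/-- The action of `S_h × S_n` on preference profiles `p : Fin h → Perm (Fin n)`:
`(p^{(φ,ψ)})_i = ψ ∘ p_{φ⁻¹ i}`. -/
def act {h n : ℕ} (g : Perm (Fin h) × Perm (Fin n)) (p : Fin h → Perm (Fin n)) :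
    Fin h → Perm (Fin n) :=
  fun i => g.2 * p (g.1⁻¹ i)

/-- The symmetry group `G(F)` of a social preference function `F`. -/
def symGroup {h n : ℕ} (F : (Fin h → Perm (Fin n)) → Perm (Fin n)) :
    Subgroup (Perm (Fin h) × Perm (Fin n)) where
  carrier := {g | ∀ p, F (act g p) = g.2 * F p}
  one_mem' := by
    intro p
    have h1 : act (1 : Perm (Fin h) × Perm (Fin n)) p = p := by
      funext i; simp [act]
    rw [h1]; simp
  mul_mem' := by
    intro a b ha hb p
    have hab : act (a * b) p = act a (act b p) := by
      funext i
      simp [act, mul_assoc]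
    rw [hab, ha, hb, Prod.snd_mul, mul_assoc]
  inv_mem' := by
    intro a ha p
    have key := ha (act a⁻¹ p)
    have h1 : act a (act a⁻¹ p) = p := by
      funext i
      simp [act, mul_assoc]
    rw [h1] at key
    rw [key]
    simp [mul_assoc]

/-- The anonymity group `G₁(F) = G(F) ∩ (S_h × {id})`. -/
def anonGroup {h n : ℕ} (F : (Fin h → Perm (Fin n)) → Perm (Fin n)) :
    Subgroup (Perm (Fin h) × Perm (Fin n)) :=
  symGroup F ⊓ Subgroup.prod ⊤ ⊥

open Classical in
/-- Patch an SPF to output the identity ranking on all constant profiles. -/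
noncomputable def patch {h n : ℕ} (F : (Fin h → Perm (Fin n)) → Perm (Fin n)) :
    (Fin h → Perm (Fin n)) → Perm (Fin n) :=
  fun p => if (∃ τ, p = fun _ => τ) then 1 else F p

lemma patch_const {h n : ℕ} (F : (Fin h → Perm (Fin n)) → Perm (Fin n))
    {p : Fin h → Perm (Fin n)} (hp : ∃ τ, p = fun _ => τ) : patch F p = 1 := by
  simp only [patch]
  rw [if_pos hp]

lemma patch_nonconst {h n : ℕ} (F : (Fin h → Perm (Fin n)) → Perm (Fin n))
    {p : Fin h → Perm (Fin n)} (hp : ¬ ∃ τ, p = fun _ => τ) : patch F p = F p := by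
  simp only [patch]
  rw [if_neg hp]

lemma act_const_iff {h n : ℕ} (g : Perm (Fin h) × Perm (Fin n)) (p : Fin h → Perm (Fin n)) :
    (∃ τ, act g p = fun _ => τ) ↔ ∃ τ, p = fun _ => τ := by
  constructor
  · rintro ⟨τ, hτ⟩
    refine ⟨g.2⁻¹ * τ, funext fun j => ?_⟩
    have h1 := congrFun hτ (g.1 j)
    simp only [act, Perm.inv_def, Equiv.symm_apply_apply] at h1
    rw [← h1, inv_mul_cancel_left]
  · rintro ⟨τ, rfl⟩
    exact ⟨g.2 * τ, funext fun i => rfl⟩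

lemma mem_symGroup {h n : ℕ} {F : (Fin h → Perm (Fin n)) → Perm (Fin n)}
    {g : Perm (Fin h) × Perm (Fin n)} :
    g ∈ symGroup F ↔ ∀ p, F (act g p) = g.2 * F p := Iff.rfl

/-- Key lemma: the symmetry group of the patched SPF is the anonymity group of `F`. -/
theorem symGroup_patch {h n : ℕ} (F : (Fin h → Perm (Fin n)) → Perm (Fin n)) :
    symGroup (patch F) = anonGroup F := by
  ext g
  rw [mem_symGroup, anonGroup, Subgroup.mem_inf, mem_symGroup, Subgroup.mem_prod]
  simp only [Subgroup.mem_top, Subgroup.mem_bot, true_and]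
  constructor
  · intro H
    have hψ : g.2 = 1 := by
      have hconst : act g (fun _ => (1 : Perm (Fin n))) = fun _ => g.2 := by
        funext i; simp [act]
      have h1 := H (fun _ => 1)
      rw [hconst, patch_const F ⟨g.2, rfl⟩, patch_const F ⟨1, rfl⟩, mul_one] at h1
      exact h1.symm
    refine ⟨fun p => ?_, hψ⟩
    by_cases hp : ∃ τ, p = fun _ => τ
    · obtain ⟨τ, rfl⟩ := hp
      have hfix : act g (fun _ => τ) = fun _ => τ := by
        funext i; simp [act, hψ]
      rw [hfix, hψ, one_mul]
    · have hp' : ¬ ∃ τ, act g p = fun _ => τ := fun h' => hp ((act_const_iff g p).mp h')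
      have h1 := H p
      rwa [patch_nonconst F hp', patch_nonconst F hp] at h1
  · rintro ⟨H, hψ⟩ p
    rw [hψ, one_mul]
    by_cases hp : ∃ τ, p = fun _ => τ
    · rw [patch_const F hp, patch_const F ((act_const_iff g p).mpr hp)]
    · rw [patch_nonconst F hp, patch_nonconst F (fun h' => hp ((act_const_iff g p).mp h')),
        H p, hψ, one_mul]

/-- For `V ≤ S_h`, `V × {id}` is a symmetry group iff it is an anonymity group;
in particular every anonymity group is a symmetry group. -/
theorem anonymity_iff_symmetry (h n : ℕ) (hh : 2 ≤ h) (hn : 2 ≤ n) :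
    (∀ V : Subgroup (Perm (Fin h)),
      ((∃ F : (Fin h → Perm (Fin n)) → Perm (Fin n),
          symGroup F = V.prod (⊥ : Subgroup (Perm (Fin n)))) ↔
       (∃ F : (Fin h → Perm (Fin n)) → Perm (Fin n),
          anonGroup F = V.prod (⊥ : Subgroup (Perm (Fin n)))))) ∧
    (∀ U : Subgroup (Perm (Fin h) × Perm (Fin n)),
      (∃ F : (Fin h → Perm (Fin n)) → Perm (Fin n), anonGroup F = U) →
        ∃ F : (Fin h → Perm (Fin n)) → Perm (Fin n), symGroup F = U) := by
  constructor
  · intro V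
    constructor
    · rintro ⟨F, hF⟩
      refine ⟨F, ?_⟩
      rw [anonGroup, hF]
      ext g
      simp only [Subgroup.mem_inf, Subgroup.mem_prod, Subgroup.mem_top, Subgroup.mem_bot,
        true_and]
      tauto
    · rintro ⟨F, hF⟩
      exact ⟨patch F, (symGroup_patch F).trans hF⟩
  · rintro U ⟨F, hF⟩
    exact ⟨patch F, (symGroup_patch F).trans hF⟩
end

section
/- For every pair of integers h ≥ 2 and n ≥ 2, the trivial subgroup {(id,id)} of G = S_h × S_n is an anonymity group, a neutrality group, and a symmetry group; that is, there exist social preference functions F, F', F'' : P → S_n with G_1(F) = {(id,id)}, G_2(F') = {(id,id)}, and G(F'') = {(id,id)}. -/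
open Equiv

/-- The neutrality group `G₂(F) = G(F) ∩ ({id} × S_n)`. -/
def neutGroup {h n : ℕ} (F : (Fin h → Perm (Fin n)) → Perm (Fin n)) :
    Subgroup (Perm (Fin h) × Perm (Fin n)) :=
  symGroup F ⊓ Subgroup.prod ⊥ ⊤


/-- Auxiliary: the number of indices of `Fin h` below `j` is `j`, for `j < h`. -/
lemma card_prefix_aux (h j : ℕ) (hj : j < h) :
    (Finset.univ.filter fun i : Fin h => (i : ℕ) < j).card = j := by
  have : (Finset.univ.filter fun i : Fin h => (i : ℕ) < j) = Finset.Iio (⟨j, hj⟩ : Fin h) := by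
    ext i
    simp [Fin.lt_def]
  rw [this, Fin.card_Iio]

/-- Auxiliary: filtering along a permutation does not change cardinality. -/
lemma card_perm_filter_aux (h : ℕ) (φ : Perm (Fin h)) (P : Fin h → Prop) [DecidablePred P] :
    (Finset.univ.filter fun i => P (φ i)).card = (Finset.univ.filter P).card := by
  rw [← Finset.card_image_of_injective (Finset.univ.filter fun i => P (φ i)) φ.injective]
  congr 1
  ext b
  simp only [Finset.mem_image, Finset.mem_filter, Finset.mem_univ, true_and]
  constructor
  · rintro ⟨a, hPa, rfl⟩; exact hPa
  · intro hb; exact ⟨φ⁻¹ b, by simpa using hb, by simp⟩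

theorem trivial_is_anon_neut_sym' (h n : ℕ) (hh : 2 ≤ h) (hn : 2 ≤ n) :
    ∃ F : (Fin h → Perm (Fin n)) → Perm (Fin n),
        symGroup F = (⊥ : Subgroup (Perm (Fin h) × Perm (Fin n))) := by
  classical
  have h0 : (0 : ℕ) < n := by omega
  have h1 : (1 : ℕ) < n := by omega
  set τ : Perm (Fin n) := Equiv.swap ⟨0, h0⟩ ⟨1, h1⟩ with hτdef
  have hτ : τ ≠ 1 := by
    rw [hτdef, Ne, swap_eq_one_iff]
    intro hEq
    have := congrArg Fin.val hEq
    simp at this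
  set A : (Fin h → Perm (Fin n)) → Prop :=
    fun p => ∃ j : ℕ, 0 < j ∧ j < h ∧ ∀ i : Fin h, p i = if (i : ℕ) < j then τ else 1 with hA
  refine ⟨fun p => if A p then τ else 1, ?_⟩
  set F : (Fin h → Perm (Fin n)) → Perm (Fin n) := fun p => if A p then τ else 1 with hF
  -- const τ is not in A
  have hconst : ∀ c : Perm (Fin n), ¬ A (fun _ => c) := by
    rintro c ⟨j, hj0, hjh, hw⟩
    have w0 := hw ⟨0, by omega⟩
    have wj := hw ⟨j, hjh⟩
    simp only [Fin.val_mk, hj0, if_true, if_pos] at w0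
    rw [if_neg (lt_irrefl j)] at wj
    exact hτ (by rw [← w0]; exact wj)
  rw [eq_bot_iff]
  intro g hg
  have hg' : ∀ p, F (act g p) = g.2 * F p := hg
  -- Step 1: g.2 = 1
  have e1 := hg' (fun _ => 1)
  have hact1 : act g (fun _ => (1 : Perm (Fin n))) = fun _ => g.2 := by
    funext i; simp [act]
  rw [hact1] at e1
  have hF1 : F (fun _ => (1 : Perm (Fin n))) = 1 := if_neg (hconst 1)
  have hFg : F (fun _ => g.2) = 1 := if_neg (hconst g.2)
  rw [hF1, hFg, mul_one] at e1
  have hψ : g.2 = 1 := e1.symm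
  -- Step 2: g.1 = 1
  have hφiff : ∀ j : ℕ, 0 < j → j < h → ∀ i : Fin h, ((g.1⁻¹ i : Fin h) : ℕ) < j ↔ (i : ℕ) < j := by
    intro j hj0 hjh
    set p : Fin h → Perm (Fin n) := fun i => if (i : ℕ) < j then τ else 1 with hp
    have hpA : A p := ⟨j, hj0, hjh, fun i => rfl⟩
    have e2 := hg' p
    have hFp : F p = τ := if_pos hpA
    have hactp : act g p = fun i => p (g.1⁻¹ i) := by
      funext i; simp [act, hψ]
    rw [hactp, hFp, hψ, one_mul] at e2
    have hAin : A (fun i => p (g.1⁻¹ i)) := by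
      by_contra hc
      rw [hF] at e2
      simp only [hc, if_neg, not_false_iff] at e2
      exact hτ e2.symm
    obtain ⟨k, hk0, hkh, hw⟩ := hAin
    have hiff : ∀ i : Fin h, ((g.1⁻¹ i : Fin h) : ℕ) < j ↔ (i : ℕ) < k := by
      intro i
      have := hw i
      rw [hp] at this
      by_cases c1 : ((g.1⁻¹ i : Fin h) : ℕ) < j <;> by_cases c2 : (i : ℕ) < k <;>
        simp only [c1, c2, if_pos, if_neg, not_false_iff] at this ⊢ <;> tauto
    -- cardinality argument: j = k
    have cj : (Finset.univ.filter fun i : Fin h => ((g.1⁻¹ i : Fin h) : ℕ) < j).card = j := by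
      rw [card_perm_filter_aux h g.1⁻¹ (fun i => (i : ℕ) < j), card_prefix_aux h j hjh]
    have ck : (Finset.univ.filter fun i : Fin h => ((g.1⁻¹ i : Fin h) : ℕ) < j).card = k := by
      have : (Finset.univ.filter fun i : Fin h => ((g.1⁻¹ i : Fin h) : ℕ) < j)
          = (Finset.univ.filter fun i : Fin h => (i : ℕ) < k) := by
        ext i; simp only [Finset.mem_filter, Finset.mem_univ, true_and, hiff i]
      rw [this, card_prefix_aux h k hkh]
    have hjk : j = k := by omega
    intro i
    rw [hiff i, hjk]
  have hφ : g.1⁻¹ = 1 := by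
    ext i
    simp only [Perm.coe_one, id_eq]
    have hlt : ((g.1⁻¹ i : Fin h) : ℕ) < h := (g.1⁻¹ i).isLt
    have hlt' : (i : ℕ) < h := i.isLt
    by_contra hne
    rcases Nat.lt_or_ge ((g.1⁻¹ i : Fin h) : ℕ) (i : ℕ) with hc | hc
    · have := (hφiff (i : ℕ) (by omega) hlt' i).mp hc
      omega
    · have hc' : (i : ℕ) < ((g.1⁻¹ i : Fin h) : ℕ) := by omega
      have := (hφiff ((g.1⁻¹ i : Fin h) : ℕ) (by omega) hlt i).mpr hc'
      omega
  have hφ1 : g.1 = 1 := inv_eq_one.mp hφ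
  rw [Subgroup.mem_bot]
  exact Prod.ext hφ1 hψ

/-- For every voting pair, the trivial group is an anonymity group, a
neutrality group and a symmetry group. -/
theorem trivial_is_anon_neut_sym (h n : ℕ) (hh : 2 ≤ h) (hn : 2 ≤ n) :
    (∃ F : (Fin h → Perm (Fin n)) → Perm (Fin n),
        anonGroup F = (⊥ : Subgroup (Perm (Fin h) × Perm (Fin n)))) ∧
    (∃ F' : (Fin h → Perm (Fin n)) → Perm (Fin n),
        neutGroup F' = (⊥ : Subgroup (Perm (Fin h) × Perm (Fin n)))) ∧
    (∃ F'' : (Fin h → Perm (Fin n)) → Perm (Fin n),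
        symGroup F'' = (⊥ : Subgroup (Perm (Fin h) × Perm (Fin n)))) := by
  obtain ⟨F, hFsym⟩ := trivial_is_anon_neut_sym' h n hh hn
  refine ⟨⟨F, ?_⟩, ⟨F, ?_⟩, ⟨F, hFsym⟩⟩
  · rw [anonGroup, hFsym, bot_inf_eq]
  · rw [neutGroup, hFsym, bot_inf_eq]
end

section
/- Every subgroup of {id} × S_n is a neutrality group: for every subgroup W ≤ S_n and every h ≥ 2 there exists a social preference function F : P → S_n with G_2(F) = {id} × W. -/
open Equiv

/-- Every subgroup of `{id} × S_n` is a neutrality group. -/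
theorem every_neutrality_group (h n : ℕ) (hh : 2 ≤ h) (hn : 2 ≤ n)
    (W : Subgroup (Perm (Fin n))) :
    ∃ F : (Fin h → Perm (Fin n)) → Perm (Fin n),
      neutGroup F = (⊥ : Subgroup (Perm (Fin h))).prod W := by
  have hi0 : 0 < h := by omega
  set i0 : Fin h := ⟨0, hi0⟩
  use fun p => p i0 * Quotient.out (QuotientGroup.mk ((p i0)⁻¹) : Perm (Fin n) ⧸ W)
  ext g
  constructor
  · rintro ⟨hsym, hprod⟩
    obtain ⟨h1, -⟩ := hprod
    refine ⟨h1, ?_⟩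
    have key := hsym (fun _ => 1)
    have h1' : g.1 = 1 := h1
    simp only [act, h1'] at key
    -- key : g.2 * 1 * out (mk (g.2 * 1)⁻¹) = g.2 * (1 * out (mk 1⁻¹))
    have key2 : Quotient.out (QuotientGroup.mk (g.2⁻¹) : Perm (Fin n) ⧸ W)
        = Quotient.out (QuotientGroup.mk ((1 : Perm (Fin n))⁻¹) : Perm (Fin n) ⧸ W) := by
      have := mul_left_cancel key
      simpa using key
    have : (QuotientGroup.mk (g.2⁻¹) : Perm (Fin n) ⧸ W)
        = QuotientGroup.mk ((1 : Perm (Fin n))⁻¹) := by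
      rw [← Quotient.out_eq (QuotientGroup.mk (g.2⁻¹) : Perm (Fin n) ⧸ W),
        ← Quotient.out_eq (QuotientGroup.mk ((1 : Perm (Fin n))⁻¹) : Perm (Fin n) ⧸ W), key2]
    rw [QuotientGroup.eq] at this
    simpa using this
  · rintro ⟨h1, hw⟩
    have h1' : g.1 = 1 := h1
    constructor
    · intro p
      simp only [act, h1', inv_one, Equiv.Perm.one_apply]
      have hq : (QuotientGroup.mk ((g.2 * p i0)⁻¹) : Perm (Fin n) ⧸ W)
          = QuotientGroup.mk ((p i0)⁻¹) := by
        rw [QuotientGroup.eq]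
        simpa using W.inv_mem hw
      rw [hq, mul_assoc]
    · exact ⟨h1, trivial⟩
end

section
/- Let V be a proper subgroup of S_h and suppose there exists a preference profile p ∈ P such that the stabilizer of p in S_h × {id} is contained in V × {id}, i.e. every φ ∈ S_h with p^{(φ,id)} = p lies in V. Then V × {id} is an anonymity group: there exists a social preference function F with G_1(F) = V × {id}. -/
open Equiv

lemma act_mul {h n : ℕ} (g g' : Perm (Fin h) × Perm (Fin n)) (p : Fin h → Perm (Fin n)) :
    act (g * g') p = act g (act g' p) := by
  funext i; simp [act, mul_assoc]

lemma act_cancel {h n : ℕ} (g : Perm (Fin h) × Perm (Fin n)) (p : Fin h → Perm (Fin n)) :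
    act g⁻¹ (act g p) = p := by
  funext i; simp [act, mul_assoc]

/-- If `V < S_h` is proper and some profile `p` has its stabilizer in
`S_h × {id}` contained in `V × {id}`, then `V × {id}` is an anonymity group. -/
theorem anonymity_of_small_stabilizer (h n : ℕ) (hh : 2 ≤ h) (hn : 2 ≤ n)
    (V : Subgroup (Perm (Fin h))) (hV : V ≠ ⊤)
    (p : Fin h → Perm (Fin n))
    (hstab : ∀ φ : Perm (Fin h), act (φ, (1 : Perm (Fin n))) p = p → φ ∈ V) :
    ∃ F : (Fin h → Perm (Fin n)) → Perm (Fin n),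
      anonGroup F = V.prod (⊥ : Subgroup (Perm (Fin n))) := by
  classical
  have h0 : (0 : ℕ) < n := by omega
  have h1n : (1 : ℕ) < n := by omega
  set σ : Perm (Fin n) := Equiv.swap ⟨0, h0⟩ ⟨1, h1n⟩ with hσ
  have hσ1 : σ ≠ 1 := by
    rw [hσ, Ne, Equiv.swap_eq_one_iff]
    intro hc
    have : (0 : ℕ) = 1 := congrArg Fin.val hc
    omega
  set F : (Fin h → Perm (Fin n)) → Perm (Fin n) :=
    fun q => if ∃ φ ∈ V, q = act (φ, 1) p then σ else 1 with hF
  have horb : ∀ (φ : Perm (Fin h)), φ ∈ V → ∀ q,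
      ((∃ φ' ∈ V, act (φ, (1 : Perm (Fin n))) q = act (φ', 1) p) ↔
       (∃ φ' ∈ V, q = act (φ', 1) p)) := by
    intro φ hφ q
    constructor
    · rintro ⟨φ', hφ', heq⟩
      refine ⟨φ⁻¹ * φ', mul_mem (inv_mem hφ) hφ', ?_⟩
      have : act (φ, (1 : Perm (Fin n)))⁻¹ (act (φ, 1) q)
          = act (φ, 1)⁻¹ (act (φ', 1) p) := by rw [heq]
      rw [act_cancel, ← act_mul] at this
      simpa using this
    · rintro ⟨φ', hφ', heq⟩
      refine ⟨φ * φ', mul_mem hφ hφ', ?_⟩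
      rw [heq, ← act_mul]
      rfl
  have hmemF : ∀ (φ : Perm (Fin h)) (ψ : Perm (Fin n)),
      ((φ, ψ) ∈ symGroup F ↔ ∀ q, F (act (φ, ψ) q) = ψ * F q) := fun _ _ => Iff.rfl
  refine ⟨F, ?_⟩
  ext ⟨φ, ψ⟩
  simp only [anonGroup, Subgroup.mem_inf, Subgroup.mem_prod, Subgroup.mem_top,
    Subgroup.mem_bot, true_and]
  constructor
  · rintro ⟨hsym, hψ⟩
    subst hψ
    refine ⟨?_, rfl⟩
    have key := (hmemF φ 1).mp hsym p
    have hp : F p = σ := by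
      rw [hF]
      simp only
      rw [if_pos ⟨1, one_mem V, by funext i; simp [act]⟩]
    rw [hp, one_mul] at key
    by_cases hc : ∃ φ' ∈ V, act (φ, (1 : Perm (Fin n))) p = act (φ', 1) p
    · obtain ⟨φ', hφ', heq⟩ := hc
      have : act ((φ', (1 : Perm (Fin n)))⁻¹ * (φ, 1)) p = p := by
        rw [act_mul, heq, act_cancel]
      have hmem := hstab (φ'⁻¹ * φ) (by simpa using this)
      have := mul_mem hφ' hmem
      simpa using this
    · exfalso
      rw [hF] at key
      simp only at key
      rw [if_neg hc] at key
      exact hσ1 key.symm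
  · rintro ⟨hφ, hψ⟩
    subst hψ
    refine ⟨(hmemF φ 1).mpr ?_, rfl⟩
    intro q
    rw [one_mul, hF]
    simp only
    by_cases hc : ∃ φ' ∈ V, q = act (φ', 1) p
    · rw [if_pos hc, if_pos ((horb φ hφ q).mpr hc)]
    · rw [if_neg hc, if_neg (fun hx => hc ((horb φ hφ q).mp hx))]
end

section
/- If h ≤ n!, then every subgroup of S_h × {id} is an anonymity group: for every subgroup V ≤ S_h there exists a social preference function F : P → S_n with G_1(F) = V × {id}. -/
open Equiv

/-- If `h ≤ n!`, then every subgroup of `S_h × {id}` is an anonymity group. -/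
theorem every_anonymity_group_of_le_factorial (h n : ℕ) (hh : 2 ≤ h) (hn : 2 ≤ n)
    (hfac : h ≤ Nat.factorial n) (V : Subgroup (Perm (Fin h))) :
    ∃ F : (Fin h → Perm (Fin n)) → Perm (Fin n),
      anonGroup F = V.prod (⊥ : Subgroup (Perm (Fin n))) := by
  classical
  obtain ⟨ι⟩ : Nonempty (Fin h ↪ Perm (Fin n)) := by
    apply Function.Embedding.nonempty_of_card_le
    simpa [Fintype.card_perm] using hfac
  set p₀ : Fin h → Perm (Fin n) := fun i => ι i with hp₀
  have hp₀inj : Function.Injective p₀ := ι.injective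
  set c : Perm (Fin n) := Equiv.swap ⟨0, by omega⟩ ⟨1, by omega⟩ with hcdef
  have hc : c ≠ 1 := by
    intro hcon
    have := congrArg (fun e : Perm (Fin n) => e ⟨0, by omega⟩) hcon
    simp [hcdef, Equiv.swap_apply_left, Fin.ext_iff] at this
  set F : (Fin h → Perm (Fin n)) → Perm (Fin n) :=
    fun p => if ∃ v ∈ V, p = act (v, 1) p₀ then 1 else c with hFdef
  have hcomp : ∀ (a b : Perm (Fin h) × Perm (Fin n)) p,
      act (a * b) p = act a (act b p) := by
    intro a b p; funext i; simp [act, mul_assoc]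
  have hF0 : F p₀ = 1 := by
    rw [hFdef]
    exact if_pos ⟨1, V.one_mem, by funext i; simp [act]⟩
  refine ⟨F, ?_⟩
  ext ⟨φ, ψ⟩
  simp only [anonGroup, Subgroup.mem_inf, Subgroup.mem_prod, Subgroup.mem_top,
    Subgroup.mem_bot, true_and]
  have hmemsym : (φ, ψ) ∈ symGroup F ↔ ∀ p, F (act (φ, ψ) p) = ψ * F p := Iff.rfl
  rw [hmemsym]
  constructor
  · rintro ⟨hsym, rfl⟩
    refine ⟨?_, rfl⟩
    have key := hsym p₀
    rw [hF0, one_mul] at key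
    by_contra hφV
    have : ¬ ∃ v ∈ V, act (φ, 1) p₀ = act (v, 1) p₀ := by
      rintro ⟨v, hv, heq⟩
      have : φ = v := by
        have : ∀ i, p₀ (φ⁻¹ i) = p₀ (v⁻¹ i) := by
          intro i
          have := congrFun heq i
          simpa [act] using this
        have h2 : ∀ i, φ⁻¹ i = v⁻¹ i := fun i => hp₀inj (this i)
        have : φ⁻¹ = v⁻¹ := Equiv.ext h2
        simpa using congrArg (·⁻¹) this
      exact hφV (this ▸ hv)
    rw [hFdef] at key
    simp only [if_neg this] at key
    exact hc key
  · rintro ⟨hφV, rfl⟩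
    refine ⟨?_, rfl⟩
    intro p
    rw [one_mul]
    by_cases hp : ∃ v ∈ V, p = act (v, 1) p₀
    · obtain ⟨v, hv, rfl⟩ := hp
      have h1 : act (φ, 1) (act (v, 1) p₀) = act (φ * v, 1) p₀ := by
        rw [show ((φ * v, 1) : Perm (Fin h) × Perm (Fin n)) = (φ, 1) * (v, 1) by
          simp [Prod.ext_iff], hcomp]
      rw [h1]
      simp only [hFdef]
      rw [if_pos ⟨φ * v, V.mul_mem hφV hv, rfl⟩,
        if_pos ⟨v, hv, rfl⟩]
    · have hp2 : ¬ ∃ v ∈ V, act (φ, 1) p = act (v, 1) p₀ := by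
        rintro ⟨v, hv, heq⟩
        refine hp ⟨φ⁻¹ * v, V.mul_mem (V.inv_mem hφV) hv, ?_⟩
        have : act ((φ, 1) : Perm (Fin h) × Perm (Fin n))⁻¹ (act (φ, 1) p) = p := by
          rw [← hcomp, inv_mul_cancel]; funext i; simp [act]
        rw [← this, heq, show ((φ, 1) : Perm (Fin h) × Perm (Fin n))⁻¹ = (φ⁻¹, 1) by
          simp [Prod.ext_iff], ← hcomp]
        simp [Prod.ext_iff]
      simp only [hFdef]
      rw [if_neg hp, if_neg hp2]
end

section
/- Let h = 3 and n = 2. Then the subgroup {id} × S_2 of G = S_3 × S_2 is not a symmetry group: for every social preference function F : (S_2)^3 → S_2 one has G(F) ≠ {id} × S_2. -/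
open Equiv

/-- single-swap profile: `σ` at position `j`, identity elsewhere. -/
def eprof (j : Fin 3) : Fin 3 → Perm (Fin 2) :=
  fun i => if i = j then Equiv.swap 0 1 else 1

lemma coset_decomp : ∀ p : Fin 3 → Perm (Fin 2), ∃ d : Perm (Fin 2),
    p = (fun _ => d) ∨ ∃ j, p = fun i => d * eprof j i := by
  decide

lemma two_of_three : ∀ x y z : Perm (Fin 2), x = y ∨ x = z ∨ y = z := by decide

lemma eprof_swap (a b j : Fin 3) :
    (fun i => eprof j (Equiv.swap a b i)) = eprof (Equiv.swap a b j) := by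
  funext i
  simp only [eprof]
  congr 1
  simp only [eq_iff_iff]
  constructor
  · intro hh
    rw [← hh, Equiv.swap_apply_self]
  · intro hh
    rw [hh, Equiv.swap_apply_self]

lemma key (F : (Fin 3 → Perm (Fin 2)) → Perm (Fin 2))
    (hpsi : ∀ (d : Perm (Fin 2)) p, F (fun i => d * p i) = d * F p)
    (a b : Fin 3) (hab : F (eprof a) = F (eprof b)) :
    ∀ p, F (act (Equiv.swap a b, 1) p) = F p := by
  intro p
  obtain ⟨d, hp | ⟨j, hp⟩⟩ := coset_decomp p
  · subst hp
    have : act (Equiv.swap a b, (1 : Perm (Fin 2))) (fun _ => d) = fun _ => d := by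
      funext i; simp [act]
    rw [this]
  · subst hp
    have h1 : act (Equiv.swap a b, (1 : Perm (Fin 2))) (fun i => d * eprof j i)
        = fun i => d * eprof (Equiv.swap a b j) i := by
      funext i
      simp only [act, one_mul]
      rw [← eprof_swap a b j]
      simp
    rw [h1, hpsi, hpsi]
    congr 1
    rcases eq_or_ne j a with rfl | hja
    · rw [Equiv.swap_apply_left]; exact hab.symm
    · rcases eq_or_ne j b with rfl | hjb
      · rw [Equiv.swap_apply_right]; exact hab
      · rw [Equiv.swap_apply_of_ne_of_ne hja hjb]

/-- For `(h,n) = (3,2)`, the subgroup `{id} × S_2` is not a symmetry group. -/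
theorem id_times_S2_not_symmetry_group
    (F : (Fin 3 → Perm (Fin 2)) → Perm (Fin 2)) :
    symGroup F ≠
      (⊥ : Subgroup (Perm (Fin 3))).prod (⊤ : Subgroup (Perm (Fin 2))) := by
  intro hEq
  have mem_iff : ∀ g : Perm (Fin 3) × Perm (Fin 2),
      (∀ p, F (act g p) = g.2 * F p) ↔ g.1 = 1 := by
    intro g
    have := SetLike.ext_iff.mp hEq g
    simpa [symGroup, Subgroup.mem_prod, Subgroup.mem_bot, Subgroup.mem_top,
      Subgroup.mem_mk, Set.mem_setOf_eq] using this
  have hpsi : ∀ (d : Perm (Fin 2)) p, F (fun i => d * p i) = d * F p := by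
    intro d p
    have h := (mem_iff (1, d)).mpr rfl p
    have h2 : act (1, d) p = fun i => d * p i := by
      funext i; simp [act]
    rw [h2] at h; exact h
  have hcontra : ∀ a b : Fin 3, F (eprof a) = F (eprof b) → Equiv.swap a b = 1 := by
    intro a b hab
    have hk := key F hpsi a b hab
    have := (mem_iff (Equiv.swap a b, 1)).mp (by simpa using hk)
    exact this
  rcases two_of_three (F (eprof 0)) (F (eprof 1)) (F (eprof 2)) with h | h | h
  · have := hcontra 0 1 h
    exact absurd this (by decide)
  · have := hcontra 0 2 h
    exact absurd this (by decide)
  · have := hcontra 1 2 h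
    exact absurd this (by decide)
end

section
/- Let h ≥ 2 and n ≥ 2 and let A_h ≤ S_h denote the alternating group. Then A_h × {id} is an anonymity group for the pair (h,n) (i.e. there exists a social preference function F with G_1(F) = A_h × {id}) if and only if h ≤ n!. -/
open Equiv

lemma act_pair_mul {h n : ℕ} (φ ψ : Perm (Fin h)) (p : Fin h → Perm (Fin n)) :
    act ((φ, 1) : Perm (Fin h) × Perm (Fin n)) (act (ψ, 1) p) = act (φ * ψ, 1) p := by
  funext i; simp [act, mul_inv_rev]

lemma act_one' {h n : ℕ} (p : Fin h → Perm (Fin n)) :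
    act ((1, 1) : Perm (Fin h) × Perm (Fin n)) p = p := by
  funext i; simp [act]

/-- `A_h × {id}` is an anonymity group for the voting pair `(h,n)` iff `h ≤ n!`. -/
theorem alternating_anonymity_iff (h n : ℕ) (hh : 2 ≤ h) (hn : 2 ≤ n) :
    (∃ F : (Fin h → Perm (Fin n)) → Perm (Fin n),
        anonGroup F =
          (alternatingGroup (Fin h)).prod (⊥ : Subgroup (Perm (Fin n)))) ↔
      h ≤ Nat.factorial n := by
  constructor
  · rintro ⟨F, hF⟩
    by_contra hle
    push_neg at hle
    have h01 : (⟨0, by omega⟩ : Fin h) ≠ ⟨1, by omega⟩ := by simp [Fin.ext_iff]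
    set σ : Perm (Fin h) := Equiv.swap ⟨0, by omega⟩ ⟨1, by omega⟩ with hσ
    have hσsign : Perm.sign σ = -1 := Perm.sign_swap h01
    have hmem : ((σ, (1 : Perm (Fin n))) : Perm (Fin h) × Perm (Fin n)) ∈ anonGroup F := by
      rw [anonGroup, Subgroup.mem_inf]
      refine ⟨mem_symGroup.mpr ?_, Subgroup.mem_prod.mpr ⟨Subgroup.mem_top _, Subgroup.mem_bot.mpr rfl⟩⟩
      intro p
      have hcard : Fintype.card (Perm (Fin n)) < Fintype.card (Fin h) := by
        simp [Fintype.card_perm]; omega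
      obtain ⟨i, j, hij, hpij⟩ := Fintype.exists_ne_map_eq_of_card_lt p hcard
      set τ := Equiv.swap i j with hτ
      have hpτ : ∀ k, p (τ k) = p k := by
        intro k
        rcases eq_or_ne k i with rfl | hki
        · simp [hτ, hpij]
        rcases eq_or_ne k j with rfl | hkj
        · simp [hτ, hpij]
        · simp [hτ, Equiv.swap_apply_of_ne_of_ne hki hkj]
      have hact : act ((σ, (1 : Perm (Fin n))) : Perm (Fin h) × Perm (Fin n)) p
          = act (σ * τ, 1) p := by
        funext k
        simp only [act, one_mul, mul_inv_rev, Perm.mul_apply]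
        rw [← hpτ (τ⁻¹ (σ⁻¹ k))]
        simp
      have hmem2 : ((σ * τ, (1 : Perm (Fin n))) : Perm (Fin h) × Perm (Fin n)) ∈ anonGroup F := by
        rw [hF, Subgroup.mem_prod]
        refine ⟨?_, Subgroup.mem_bot.mpr rfl⟩
        rw [Perm.mem_alternatingGroup, map_mul, hσsign, Perm.sign_swap hij]
        decide
      have hsym2 := (Subgroup.mem_inf.mp hmem2).1
      have := mem_symGroup.mp hsym2 p
      rw [hact, this, one_mul]
    rw [hF, Subgroup.mem_prod] at hmem
    have := Perm.mem_alternatingGroup.mp hmem.1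
    rw [hσsign] at this
    exact absurd this (by decide)
  · intro hle
    classical
    obtain ⟨e⟩ : Nonempty (Fin h ↪ Perm (Fin n)) := by
      rw [Function.Embedding.nonempty_iff_card_le]
      simpa [Fintype.card_perm] using hle
    set p₀ : Fin h → Perm (Fin n) := (e : Fin h → Perm (Fin n)) with hp₀
    have hinj : Function.Injective p₀ := e.injective
    have h01n : (⟨0, by omega⟩ : Fin n) ≠ ⟨1, by omega⟩ := by simp [Fin.ext_iff]
    set c : Perm (Fin n) := Equiv.swap ⟨0, by omega⟩ ⟨1, by omega⟩ with hc
    have hc1 : c ≠ 1 := by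
      simp [hc, Equiv.swap_eq_one_iff, h01n]
    set F : (Fin h → Perm (Fin n)) → Perm (Fin n) :=
      fun p => if ∃ φ : Perm (Fin h), p = act (φ, 1) p₀ ∧ Perm.sign φ = -1 then c else 1
      with hFdef
    have uniq : ∀ ψ : Perm (Fin h), p₀ = act ((ψ, 1) : Perm (Fin h) × Perm (Fin n)) p₀ → ψ = 1 := by
      intro ψ hψ
      ext i
      have := congrFun hψ (ψ i)
      simp only [act, one_mul] at this
      have h2 : ψ⁻¹ (ψ i) = i := by simp
      rw [h2] at this
      have := hinj this
      simp [this]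
    have orbit_iff : ∀ (φ : Perm (Fin h)), Perm.sign φ = 1 → ∀ p,
        ((∃ ψ : Perm (Fin h), act ((φ, 1) : Perm (Fin h) × Perm (Fin n)) p = act (ψ, 1) p₀ ∧ Perm.sign ψ = -1) ↔
         (∃ ψ : Perm (Fin h), p = act (ψ, 1) p₀ ∧ Perm.sign ψ = -1)) := by
      intro φ hφ p
      constructor
      · rintro ⟨ψ, heq, hs⟩
        refine ⟨φ⁻¹ * ψ, ?_, by simp [map_mul, hφ, hs]⟩
        have h2 : act ((φ⁻¹, 1) : Perm (Fin h) × Perm (Fin n)) (act (φ, 1) p)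
            = act (φ⁻¹, 1) (act (ψ, 1) p₀) := by rw [heq]
        rw [act_pair_mul, act_pair_mul, inv_mul_cancel, act_one'] at h2
        exact h2
      · rintro ⟨ψ, heq, hs⟩
        exact ⟨φ * ψ, by rw [heq, act_pair_mul], by simp [map_mul, hφ, hs]⟩
    refine ⟨F, ?_⟩
    ext g
    obtain ⟨φ, ψ⟩ := g
    rw [anonGroup, Subgroup.mem_inf, Subgroup.mem_prod, Subgroup.mem_prod, Subgroup.mem_bot]
    constructor
    · rintro ⟨hsym, -, hψ1⟩
      refine ⟨?_, hψ1⟩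
      subst hψ1
      rw [Perm.mem_alternatingGroup]
      rcases Int.units_eq_one_or (Perm.sign φ) with hs | hs
      · exact hs
      exfalso
      have key := mem_symGroup.mp hsym p₀
      simp only [one_mul] at key
      have hFp₀ : F p₀ = 1 := by
        rw [hFdef]
        simp only
        rw [if_neg]
        rintro ⟨ψ', heq, hsψ⟩
        have := uniq ψ' heq
        rw [this] at hsψ
        simp at hsψ
      have hFact : F (act ((φ, (1 : Perm (Fin n))) : Perm (Fin h) × Perm (Fin n)) p₀) = c := by
        rw [hFdef]
        simp only
        rw [if_pos]
        exact ⟨φ, rfl, hs⟩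
      rw [hFp₀, hFact] at key
      exact hc1 key
    · rintro ⟨hφ, hψ1⟩
      subst hψ1
      refine ⟨mem_symGroup.mpr ?_, trivial, rfl⟩
      intro p
      simp only [one_mul]
      rw [hFdef]
      simp only
      rw [if_congr (orbit_iff φ (Perm.mem_alternatingGroup.mp hφ) p) rfl rfl]
end
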